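/- For every ε₁ ≥ 0 and ε₂ ≥ 0, every ε₁-LDP randomizer R₁ : 𝒳 → 𝒴 (with 𝒴 countable) and every ε₂-LDP randomizer R₂ : 𝒴 → 𝒵, the composition R₂ ∘ R₁ is an ε-LDP randomizer, where ε = ln((e^{ε₁+ε₂} + 1)/(e^{ε₁} + e^{ε₂})). -/
import Mathlib


open scoped ENNReal

/-- Probability that a sample from the PMF `p` lands in the set `S` (as a real number). -/
noncomputable def pr {Y : Type*} (p : PMF Y) (S : Set Y) : ℝ :=
  (p.toOuterMeasure S).toReal

/-- The local randomizer `R` satisfies `ε`-local differential privacy. -/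
def IsPureLDP {X Y : Type*} (R : X → PMF Y) (ε : ℝ) : Prop :=
  ∀ x x' : X, ∀ S : Set Y, pr (R x) S ≤ Real.exp ε * pr (R x') S


private lemma pmf_om_le_one {Y : Type*} (p : PMF Y) (S : Set Y) : p.toOuterMeasure S ≤ 1 := by
  rw [PMF.toOuterMeasure_apply]
  calc ∑' y, S.indicator p y ≤ ∑' y, p y :=
        ENNReal.tsum_le_tsum (fun y => Set.indicator_le_self _ _ y)
    _ = 1 := p.tsum_coe

private lemma pmf_om_ne_top {Y : Type*} (p : PMF Y) (S : Set Y) : p.toOuterMeasure S ≠ ∞ :=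
  fun h => by simpa [h] using pmf_om_le_one p S

/-- Expectation expansion for bind. -/
private lemma pr_bind_eq {Y Z : Type*} (p : PMF Y) (R : Y → PMF Z) (S : Set Z) :
    pr (p.bind R) S = ∑' y, (p y).toReal * pr (R y) S := by
  unfold pr
  rw [PMF.toOuterMeasure_bind_apply,
    ENNReal.tsum_toReal_eq (fun y => ENNReal.mul_ne_top (p.apply_ne_top y) (pmf_om_ne_top _ _))]
  exact tsum_congr fun y => ENNReal.toReal_mul

/-- Composition of pure LDP randomizers: for every `ε₁-LDP` randomizer `R₁ : 𝒳 → 𝒴`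
(with `𝒴` countable) and every `ε₂`-LDP randomizer `R₂ : 𝒴 → 𝒵`, the composition
`R₂ ∘ R₁` (i.e. `x ↦ (R₁ x).bind R₂`) is `ε`-LDP for
`ε = ln((e^{ε₁+ε₂} + 1)/(e^{ε₁} + e^{ε₂}))`. -/
theorem composition_of_pure_ldp_randomizers {X Y Z : Type*} [Countable Y]
    (ε₁ ε₂ : ℝ) (hε₁ : 0 ≤ ε₁) (hε₂ : 0 ≤ ε₂)
    (R₁ : X → PMF Y) (R₂ : Y → PMF Z)
    (h₁ : IsPureLDP R₁ ε₁) (h₂ : IsPureLDP R₂ ε₂) :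
    IsPureLDP (fun x => (R₁ x).bind R₂)
      (Real.log ((Real.exp (ε₁ + ε₂) + 1) / (Real.exp ε₁ + Real.exp ε₂))) := by
  intro x x' S
  set A := Real.exp ε₁ with hAdef
  set B := Real.exp ε₂ with hBdef
  have hA1 : 1 ≤ A := Real.one_le_exp hε₁
  have hB1 : 1 ≤ B := Real.one_le_exp hε₂
  have hA0 : (0:ℝ) < A := Real.exp_pos _
  have hB0 : (0:ℝ) < B := Real.exp_pos _
  -- Nonempty Y
  obtain ⟨y₀, -⟩ := (R₁ x).support_nonempty
  have hN : Nonempty Y := ⟨y₀⟩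
  -- notation
  set P : Y → ℝ := fun y => ((R₁ x) y).toReal with hPdef
  set Q : Y → ℝ := fun y => ((R₁ x') y).toReal with hQdef
  set f : Y → ℝ := fun y => pr (R₂ y) S with hfdef
  have hP0 : ∀ y, 0 ≤ P y := fun y => ENNReal.toReal_nonneg
  have hQ0 : ∀ y, 0 ≤ Q y := fun y => ENNReal.toReal_nonneg
  have hf0 : ∀ y, 0 ≤ f y := fun y => ENNReal.toReal_nonneg
  -- pointwise LDP for R₁ (both directions)
  have prsingle : ∀ (r : PMF Y) (y : Y), pr r {y} = (r y).toReal := by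
    intro r y; unfold pr; rw [PMF.toOuterMeasure_apply_singleton]
  have hPQ : ∀ y, P y ≤ A * Q y := by
    intro y
    have := h₁ x x' {y}
    rwa [prsingle, prsingle] at this
  have hQP : ∀ y, Q y ≤ A * P y := by
    intro y
    have := h₁ x' x {y}
    rwa [prsingle, prsingle] at this
  -- LDP for R₂ on S
  have hff : ∀ y y', f y ≤ B * f y' := fun y y' => h₂ y y' S
  -- inf and sup of f
  have hbddb : BddBelow (Set.range f) := ⟨0, fun r ⟨y, hy⟩ => hy ▸ hf0 y⟩
  set m : ℝ := ⨅ y, f y with hmdef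
  have hmle : ∀ y, m ≤ f y := fun y => ciInf_le hbddb y
  have hm0 : 0 ≤ m := le_ciInf hf0
  have hfBm : ∀ y, f y ≤ B * m := by
    intro y
    have h1 : f y / B ≤ m := le_ciInf fun y' => (div_le_iff₀' hB0).2 (hff y y')
    calc f y = B * (f y / B) := by field_simp
      _ ≤ B * m := by nlinarith
  have hbdda : BddAbove (Set.range f) := ⟨B * m, fun r ⟨y, hy⟩ => hy ▸ hfBm y⟩
  set M : ℝ := ⨆ y, f y with hMdef
  have hfM : ∀ y, f y ≤ M := fun y => le_ciSup hbdda y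
  have hMBm : M ≤ B * m := ciSup_le hfBm
  set d : ℝ := M - m with hddef
  have hd0 : 0 ≤ d := by have := hmle y₀; have := hfM y₀; simp only [hddef]; linarith
  set g : Y → ℝ := fun y => f y - m with hgdef
  have hg0 : ∀ y, 0 ≤ g y := fun y => by simp only [hgdef]; linarith [hmle y]
  have hgd : ∀ y, g y ≤ d := fun y => by simp only [hgdef, hddef]; linarith [hfM y]
  -- summability
  have hPsum : Summable P := ENNReal.summable_toReal (R₁ x).tsum_coe_ne_top
  have hQsum : Summable Q := ENNReal.summable_toReal (R₁ x').tsum_coe_ne_top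
  have hPsum1 : ∑' y, P y = 1 := by
    simp only [hPdef]
    rw [← ENNReal.tsum_toReal_eq (fun y => (R₁ x).apply_ne_top y), (R₁ x).tsum_coe,
      ENNReal.toReal_one]
  have hQsum1 : ∑' y, Q y = 1 := by
    simp only [hQdef]
    rw [← ENNReal.tsum_toReal_eq (fun y => (R₁ x').apply_ne_top y), (R₁ x').tsum_coe,
      ENNReal.toReal_one]
  have hsummul : ∀ (W : Y → ℝ), Summable W → (∀ y, 0 ≤ W y) →
      Summable (fun y => W y * g y) := by
    intro W hW hW0
    apply Summable.of_nonneg_of_le (fun y => mul_nonneg (hW0 y) (hg0 y))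
      (fun y => mul_le_mul_of_nonneg_left (hgd y) (hW0 y)) (hW.mul_right d)
  have hPg : Summable (fun y => P y * g y) := hsummul P hPsum hP0
  have hQg : Summable (fun y => Q y * g y) := hsummul Q hQsum hQ0
  set s : ℝ := ∑' y, P y * g y with hsdef
  set t : ℝ := ∑' y, Q y * g y with htdef
  have hs0 : 0 ≤ s := tsum_nonneg (fun y => mul_nonneg (hP0 y) (hg0 y))
  have ht0 : 0 ≤ t := tsum_nonneg (fun y => mul_nonneg (hQ0 y) (hg0 y))
  -- expansions of the two probabilities
  have hexp : ∀ (W : Y → ℝ), Summable W → (∀ y, 0 ≤ W y) → (∑' y, W y = 1) →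
      ∑' y, W y * f y = m + ∑' y, W y * g y := by
    intro W hW hW0 hW1
    have h1 : ∀ y, W y * f y = W y * m + W y * g y := by
      intro y; simp only [hgdef]; ring
    rw [tsum_congr h1, Summable.tsum_add (hW.mul_right m) (hsummul W hW hW0), tsum_mul_right, hW1, one_mul]
  have hLHS : pr (((R₁ x).bind R₂)) S = m + s := by
    rw [pr_bind_eq]; exact hexp P hPsum hP0 hPsum1
  have hRHS : pr (((R₁ x').bind R₂)) S = m + t := by
    rw [pr_bind_eq]; exact hexp Q hQsum hQ0 hQsum1
  -- constraint s ≤ A * t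
  have hsAt : s ≤ A * t := by
    have : s ≤ ∑' y, A * (Q y * g y) := by
      apply Summable.tsum_le_tsum _ hPg (hQg.mul_left A)
      intro y
      have := mul_le_mul_of_nonneg_right (hPQ y) (hg0 y)
      nlinarith
    rwa [tsum_mul_left] at this
  -- constraint d - t ≤ A * (d - s)
  have hQd : Summable (fun y => Q y * (d - g y)) := by
    have h1 : ∀ y, Q y * (d - g y) = Q y * d - Q y * g y := fun y => by ring
    rw [funext h1]; exact (hQsum.mul_right d).sub hQg
  have hPd : Summable (fun y => P y * (d - g y)) := by
    have h1 : ∀ y, P y * (d - g y) = P y * d - P y * g y := fun y => by ring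
    rw [funext h1]; exact (hPsum.mul_right d).sub hPg
  have hdt : d - t ≤ A * (d - s) := by
    have hQdval : ∑' y, Q y * (d - g y) = d - t := by
      have h1 : ∀ y, Q y * (d - g y) = Q y * d - Q y * g y := fun y => by ring
      rw [tsum_congr h1, Summable.tsum_sub (hQsum.mul_right d) hQg, tsum_mul_right, hQsum1, one_mul]
    have hPdval : ∑' y, P y * (d - g y) = d - s := by
      have h1 : ∀ y, P y * (d - g y) = P y * d - P y * g y := fun y => by ring
      rw [tsum_congr h1, Summable.tsum_sub (hPsum.mul_right d) hPg, tsum_mul_right, hPsum1, one_mul]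
    have hle : ∑' y, Q y * (d - g y) ≤ ∑' y, A * (P y * (d - g y)) := by
      apply Summable.tsum_le_tsum _ hQd (hPd.mul_left A)
      intro y
      have hdg : 0 ≤ d - g y := by linarith [hgd y]
      have := mul_le_mul_of_nonneg_right (hQP y) hdg
      nlinarith
    rw [hQdval, tsum_mul_left, hPdval] at hle
    exact hle
  -- finish
  have hden : (0:ℝ) < A + B := by linarith
  have hKpos : (0:ℝ) < (Real.exp (ε₁ + ε₂) + 1) / (A + B) := by
    apply div_pos _ hden
    have := Real.exp_pos (ε₁ + ε₂); linarith
  rw [Real.exp_log hKpos, hLHS, hRHS, Real.exp_add, ← hAdef, ← hBdef]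
  rw [div_mul_eq_mul_div, le_div_iff₀ hden]
  -- key algebraic inequality
  have k1 : 0 ≤ B * (A * t - s) := mul_nonneg (le_of_lt hB0) (by linarith)
  have k2 : 0 ≤ A * (d - s) - (d - t) := by linarith
  have k3 : 0 ≤ (A - 1) * ((B - 1) * m - d) := by
    apply mul_nonneg (by linarith)
    simp only [hddef]; nlinarith
  nlinarith [k1, k2, k3]
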